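/- Let F = F(X) be the free group on X = {x₁, …, xₙ}, let G = F/N be a finite quotient of F, let p be a prime not dividing the order of G, set M = Nᵖ[N, N], and let γ : F/M → F/N be the canonical homomorphism. Then for every i = 1, …, n, the image γ(C_{F/M}(x_i M)) of the centralizer of x_i M in F/M coincides with the cyclic subgroup ⟨x_i N⟩ of F/N. -/

import Mathlib

set_option linter.unusedVariables false
set_option linter.unusedSectionVars false

namespace CSP

variable {F : Type*} [Group F]

/-- The subgroup `Nᵖ[N,N]` generated by all `p`-th powers of elements of `N`
together with the commutator subgroup `[N,N]`. -/
def powCommSubgroup (p : ℕ) (N : Subgroup F) : Subgroup F :=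
  Subgroup.closure ((· ^ p) '' (N : Set F)) ⊔ ⁅N, N⁆

lemma powCommSubgroup_le (p : ℕ) (N : Subgroup F) : powCommSubgroup p N ≤ N := by
  apply sup_le
  · rw [Subgroup.closure_le]
    rintro _ ⟨x, hx, rfl⟩
    exact N.pow_mem hx p
  · refine Subgroup.commutator_le.2 fun a ha b hb => ?_
    rw [commutatorElement_def]
    exact N.mul_mem (N.mul_mem (N.mul_mem ha hb) (N.inv_mem ha)) (N.inv_mem hb)

instance powCommSubgroup_normal (p : ℕ) (N : Subgroup F) [hN : N.Normal] :
    (powCommSubgroup p N).Normal := by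
  have h1 : (Subgroup.closure ((· ^ p) '' (N : Set F))).Normal := by
    constructor
    intro n hn g
    have hmap : Subgroup.map (MulAut.conj g).toMonoidHom
        (Subgroup.closure ((· ^ p) '' (N : Set F)))
        ≤ Subgroup.closure ((· ^ p) '' (N : Set F)) := by
      rw [MonoidHom.map_closure]
      apply Subgroup.closure_mono
      rintro _ ⟨_, ⟨x, hx, rfl⟩, rfl⟩
      exact ⟨g * x * g⁻¹, hN.conj_mem x hx g, by simp [conj_pow, MulAut.conj_apply]⟩
    exact hmap ⟨n, hn, rfl⟩
  haveI := h1
  unfold powCommSubgroup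
  infer_instance

section Aux

variable (n p : ℕ) (G : Type*) [Group G]

/-- The module `(𝔽ₚ[G])ⁿ`, written multiplicatively. -/
abbrev Vm : Type _ := Fin n → G → Multiplicative (ZMod p)

/-- The left-translation action of `G` on `Vm n p G`. -/
def act : G →* MulAut (Vm n p G) where
  toFun g :=
    { toFun := fun v j x => v j (g⁻¹ * x)
      invFun := fun v j x => v j (g * x)
      left_inv := fun v => by funext j x; simp [← mul_assoc]
      right_inv := fun v => by funext j x; simp [← mul_assoc]
      map_mul' := fun v w => rfl }
  map_one' := by ext v j x; simp
  map_mul' := fun g h => by ext v j x; simp [mul_assoc]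

variable [DecidableEq G]

/-- The `i`-th basis vector of `Vm n p G`. -/
def ee (i : Fin n) : Vm n p G := fun j x =>
  if j = i ∧ x = 1 then Multiplicative.ofAdd (1 : ZMod p) else 1

/-- The Magnus-type homomorphism `F → (𝔽ₚ[G])ⁿ ⋊ G`. -/
def mw (g : Fin n → G) : FreeGroup (Fin n) →* (Vm n p G ⋊[act n p G] G) :=
  FreeGroup.lift fun j => ⟨ee n p G j, g j⟩

lemma right_mw (g : Fin n → G) (f : FreeGroup (Fin n)) :
    (mw n p G g f).right = FreeGroup.lift g f := by
  have : (SemidirectProduct.rightHom.comp (mw n p G g)) = FreeGroup.lift g :=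
    FreeGroup.ext_hom _ _ (fun a => by simp [mw, SemidirectProduct.rightHom])
  have h2 := DFunLike.congr_fun this f
  simpa [SemidirectProduct.rightHom] using h2

lemma pow_p_eq_one (a : Vm n p G) : a ^ p = 1 := by
  funext j x
  have h : (a ^ p) j x = (a j x) ^ p := rfl
  rw [h]
  show (a j x) ^ p = Multiplicative.ofAdd (0 : ZMod p)
  rw [← ofAdd_toAdd (a j x), ← ofAdd_nsmul]
  congr 1
  simp [nsmul_eq_mul, ZMod.natCast_self]

lemma eq_inl_of_right_eq_one (w : Vm n p G ⋊[act n p G] G) (h : w.right = 1) :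
    w = SemidirectProduct.inl w.left := by
  obtain ⟨a, b⟩ := w
  subst h
  rfl

lemma key_centralizer [Fintype G] (hp : p.Prime) (i : Fin n) (g : G)
    (w : Vm n p G ⋊[act n p G] G)
    (hc : w * ⟨ee n p G i, g⟩ = (⟨ee n p G i, g⟩ : Vm n p G ⋊[act n p G] G) * w) :
    w.right ∈ Subgroup.zpowers g := by
  haveI : Fact p.Prime := ⟨hp⟩
  obtain ⟨a, h⟩ := w
  show h ∈ Subgroup.zpowers g
  by_contra hh
  have hl : a * (act n p G) h (ee n p G i) = ee n p G i * (act n p G) g a :=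
    congrArg SemidirectProduct.left hc
  set b : G → ZMod p := fun x => Multiplicative.toAdd (a i x) with hb
  have hx : ∀ x : G, b x - b (g⁻¹ * x)
      = (if x = 1 then (1:ZMod p) else 0) - (if x = h then 1 else 0) := by
    intro x
    have h1 := congrFun (congrFun hl i) x
    have h2 : a i x * (if h⁻¹ * x = 1 then Multiplicative.ofAdd (1:ZMod p) else 1)
        = (if x = 1 then Multiplicative.ofAdd (1:ZMod p) else 1) * a i (g⁻¹ * x) := by
      simpa [act, ee, Pi.mul_apply] using h1
    have h3 := congrArg Multiplicative.toAdd h2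
    simp only [toAdd_mul, apply_ite Multiplicative.toAdd, toAdd_ofAdd, toAdd_one,
      inv_mul_eq_one, eq_comm (a := h)] at h3
    rw [hb]
    linear_combination h3
  set Z := Subgroup.zpowers g with hZ
  have hsum0 : ∑ y : Z, b (g⁻¹ * (y:G)) = ∑ y : Z, b (y:G) := by
    refine Fintype.sum_equiv (Equiv.mulLeft (⟨g, Subgroup.mem_zpowers g⟩ : Z)⁻¹)
      (fun y => b (g⁻¹ * (y:G))) (fun y => b (y:G)) (fun y => ?_)
    simp [Equiv.mulLeft]
  have hsum1 : ∑ y : Z, (b (y:G) - b (g⁻¹ * (y:G))) = 0 := by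
    rw [Finset.sum_sub_distrib, hsum0, sub_self]
  have hsum2 : ∑ y : Z, ((if (y:G) = 1 then (1:ZMod p) else 0) - (if (y:G) = h then 1 else 0))
      = 1 := by
    rw [Finset.sum_sub_distrib]
    have e1 : ∑ y : Z, (if (y:G) = 1 then (1:ZMod p) else 0) = 1 := by
      rw [Fintype.sum_eq_single (1 : Z)]
      · simp
      · intro y hy
        rw [if_neg]
        intro he
        exact hy (Subtype.ext he)
    have e2 : ∑ y : Z, (if (y:G) = h then (1:ZMod p) else 0) = 0 := by
      refine Finset.sum_eq_zero fun y _ => if_neg fun he => hh ?_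
      rw [← he]; exact y.2
    rw [e1, e2, sub_zero]
  rw [show (∑ y : Z, (b (y:G) - b (g⁻¹ * (y:G))))
      = ∑ y : Z, ((if (y:G) = 1 then (1:ZMod p) else 0) - (if (y:G) = h then 1 else 0))
    from Finset.sum_congr rfl fun y _ => hx y] at hsum1
  rw [hsum2] at hsum1
  exact one_ne_zero hsum1

end Aux

theorem centralizer_image_eq_cyclic
    (n : ℕ) (N : Subgroup (FreeGroup (Fin n))) [N.Normal]
    [Finite (FreeGroup (Fin n) ⧸ N)]
    (p : ℕ) (hp : p.Prime) (hpG : ¬ p ∣ Nat.card (FreeGroup (Fin n) ⧸ N)) :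
    ∀ i : Fin n,
      Subgroup.map
        (QuotientGroup.map (powCommSubgroup p N) N (MonoidHom.id (FreeGroup (Fin n)))
          (by simpa using powCommSubgroup_le p N))
        (Subgroup.centralizer
          {((FreeGroup.of i : FreeGroup (Fin n)) :
              FreeGroup (Fin n) ⧸ powCommSubgroup p N)})
      = Subgroup.zpowers ((FreeGroup.of i : FreeGroup (Fin n)) : FreeGroup (Fin n) ⧸ N) := by
  classical
  intro i
  haveI : Fintype (FreeGroup (Fin n) ⧸ N) := Fintype.ofFinite _
  set G := FreeGroup (Fin n) ⧸ N with hG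
  set q : FreeGroup (Fin n) →* G := QuotientGroup.mk' N with hqdef
  set φ := mw n p G (fun j => q (FreeGroup.of j)) with hφ
  have hlift : FreeGroup.lift (fun j => q (FreeGroup.of j)) = q :=
    FreeGroup.ext_hom _ _ fun a => by simp
  have hright : ∀ f, (φ f).right = q f := fun f => by
    rw [hφ, right_mw, hlift]
  have hker : powCommSubgroup p N ≤ φ.ker := by
    apply sup_le
    · rw [Subgroup.closure_le]
      rintro _ ⟨y, hy, rfl⟩
      have h1 : (φ y).right = 1 := by
        rw [hright]
        exact (QuotientGroup.eq_one_iff y).2 hy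
      simp only [SetLike.mem_coe, MonoidHom.mem_ker, map_pow]
      rw [eq_inl_of_right_eq_one n p G (φ y) h1, ← map_pow, pow_p_eq_one, map_one]
    · rw [Subgroup.commutator_le]
      intro y hy z hz
      have h1 : (φ y).right = 1 := by
        rw [hright]; exact (QuotientGroup.eq_one_iff y).2 hy
      have h2 : (φ z).right = 1 := by
        rw [hright]; exact (QuotientGroup.eq_one_iff z).2 hz
      rw [MonoidHom.mem_ker, map_commutatorElement,
        eq_inl_of_right_eq_one n p G (φ y) h1, eq_inl_of_right_eq_one n p G (φ z) h2,
        ← map_commutatorElement]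
      have hcomm : @Bracket.bracket (Vm n p G) (Vm n p G) commutatorElement (φ y).left (φ z).left = 1 :=
        commutatorElement_eq_one_iff_commute.2 (Commute.all _ _)
      rw [hcomm, map_one]
  apply le_antisymm
  · rintro _ ⟨y, hy, rfl⟩
    obtain ⟨f, rfl⟩ := QuotientGroup.mk_surjective y
    have hy' := (Subgroup.mem_centralizer_iff.1 hy) _ (Set.mem_singleton _)
    have hM : (FreeGroup.of i * f)⁻¹ * (f * FreeGroup.of i) ∈ powCommSubgroup p N := by
      rw [← QuotientGroup.eq]
      simpa using hy'
    have hφeq : φ (FreeGroup.of i * f) = φ (f * FreeGroup.of i) := by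
      have h1 : φ ((FreeGroup.of i * f)⁻¹ * (f * FreeGroup.of i)) = 1 := hker hM
      rw [map_mul, map_inv] at h1
      exact (inv_mul_eq_one.1 h1)
    have hu : φ (FreeGroup.of i) = ⟨ee n p G i, q (FreeGroup.of i)⟩ := by
      rw [hφ]; exact FreeGroup.lift_apply_of
    have hc : φ f * (⟨ee n p G i, q (FreeGroup.of i)⟩ : Vm n p G ⋊[act n p G] G)
        = (⟨ee n p G i, q (FreeGroup.of i)⟩ : Vm n p G ⋊[act n p G] G) * φ f := by
      rw [← hu, ← map_mul, ← map_mul, hφeq]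
    have hkey := key_centralizer n p G hp i (q (FreeGroup.of i)) (φ f) hc
    rw [hright] at hkey
    simpa [QuotientGroup.map_mk] using (show ((f : FreeGroup (Fin n) ⧸ N)) ∈ Subgroup.zpowers ((FreeGroup.of i : FreeGroup (Fin n)) : FreeGroup (Fin n) ⧸ N) from hkey)
  · rw [Subgroup.zpowers_le]
    refine Subgroup.mem_map.2 ⟨((FreeGroup.of i : FreeGroup (Fin n)) :
        FreeGroup (Fin n) ⧸ powCommSubgroup p N), ?_, ?_⟩
    · exact Subgroup.mem_centralizer_iff.2 fun g hg => by
        rw [Set.eq_of_mem_singleton hg]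
    · simp [QuotientGroup.map_mk]


end CSP
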